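/- Let j be a variable satisfying the finite-sample PF property (j ∈ f_C(V) whenever j ∈ V). Then in AdaSub the waiting times between successive considerations of j satisfy T_j^{(i+1)} − T_j^{(i)} ~ Geometric((q + Ki)/(p + Ki)), and consequently E[T_j^{(m)}] = ∑_{i=0}^{m-1} (p + Ki)/(q + Ki). -/

import Mathlib

open MeasureTheory Filter

open scoped ENNReal

namespace AdaSubPF

variable {Ω : Type*} {m0 : MeasurableSpace Ω}

noncomputable def aN (Z : ℕ → Ω → ℝ) (t : ℕ) (ω : Ω) : ℝ := ∑ l ∈ Finset.Icc 1 t, Z l ω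

def aB (Z : ℕ → Ω → ℝ) (i t : ℕ) : Set Ω :=
  {ω | aN Z t ω = (i : ℝ) ∧ (Z t ω = 1 ∨ t = 0)}

def aD (Z : ℕ → Ω → ℝ) (i t k : ℕ) : Set Ω :=
  aB Z i t ∩ {ω | aN Z (t + k) ω = (i : ℝ) ∧ Z (t + k + 1) ω = 1}

noncomputable def aT (Z : ℕ → Ω → ℝ) (i : ℕ) (ω : Ω) : ℕ := sInf {t | aN Z t ω = (i : ℝ)}

variable {Z : ℕ → Ω → ℝ}

lemma denom_pos {q p K : ℝ} (hq : 0 < q) (hqp : q < p) (hK : 0 < K) (i : ℕ) :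
    0 < q + K * i ∧ 0 < p + K * i := by
  have h1 : (0:ℝ) ≤ K * i := mul_nonneg hK.le (Nat.cast_nonneg i)
  constructor <;> linarith

lemma r_pos {q p K : ℝ} (hq : 0 < q) (hqp : q < p) (hK : 0 < K) (i : ℕ) :
    0 < (q + K * i) / (p + K * i) :=
  div_pos (denom_pos hq hqp hK i).1 (denom_pos hq hqp hK i).2

lemma r_lt_one {q p K : ℝ} (hq : 0 < q) (hqp : q < p) (hK : 0 < K) (i : ℕ) :
    (q + K * i) / (p + K * i) < 1 := by
  rw [div_lt_one (denom_pos hq hqp hK i).2]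
  linarith

lemma aN_zero (ω : Ω) : aN Z 0 ω = 0 := by simp [aN]

lemma T_zero (ω : Ω) : aT Z 0 ω = 0 :=
  Nat.sInf_eq_zero.mpr (Or.inl (by simp [Set.mem_setOf_eq, aN_zero]))

lemma aN_succ (t : ℕ) (ω : Ω) : aN Z (t + 1) ω = aN Z t ω + Z (t + 1) ω := by
  unfold aN
  rw [← Finset.sum_Icc_succ_top (by omega : 1 ≤ t + 1)]

section basic
variable (h01 : ∀ t ω, Z t ω = 0 ∨ Z t ω = 1)
include h01

lemma aN_mono (ω : Ω) {s t : ℕ} (h : s ≤ t) : aN Z s ω ≤ aN Z t ω := by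
  induction t with
  | zero => simp_all
  | succ t ih =>
    rcases Nat.lt_succ_iff_lt_or_eq.mp (Nat.lt_succ_of_le h) with h' | h'
    · have := ih (by omega)
      rcases h01 (t+1) ω with hz | hz <;> rw [aN_succ] <;> linarith
    · subst h'; rfl

lemma B_T {i t : ℕ} {ω : Ω} (hω : ω ∈ aB Z i t) : aT Z i ω = t := by
  obtain ⟨hN, hZt⟩ := hω
  refine le_antisymm (Nat.sInf_le hN) (le_csInf ⟨t, hN⟩ ?_)
  intro s hs
  by_contra hlt
  push_neg at hlt
  have ht : t ≠ 0 := by omega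
  obtain ⟨t', rfl⟩ := Nat.exists_eq_succ_of_ne_zero ht
  simp only [Nat.succ_eq_add_one] at *
  rcases hZt with hZt | hZt
  swap; · omega
  have h1 : aN Z s ω ≤ aN Z t' ω := aN_mono h01 ω (by omega)
  have h2 : aN Z (t' + 1) ω = aN Z t' ω + 1 := by rw [aN_succ, hZt]
  have hs' : aN Z s ω = (i : ℝ) := hs
  rw [hN] at h2
  linarith

lemma T_B {i : ℕ} {ω : Ω} (hne : ∃ s, aN Z s ω = (i : ℝ)) : ω ∈ aB Z i (aT Z i ω) := by
  have hmem : aT Z i ω ∈ {t | aN Z t ω = (i : ℝ)} := Nat.sInf_mem hne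
  refine ⟨hmem, ?_⟩
  rcases Nat.eq_zero_or_pos (aT Z i ω) with h0 | hpos
  · exact Or.inr h0
  · left
    obtain ⟨u, hu⟩ := Nat.exists_eq_succ_of_ne_zero (by omega : aT Z i ω ≠ 0)
    have hult : u < aT Z i ω := by omega
    have hu' : u ∉ {t | aN Z t ω = (i : ℝ)} := Nat.notMem_of_lt_sInf hult
    rcases h01 (u + 1) ω with hz | hz
    · exfalso
      apply hu'
      have h2 := aN_succ (Z := Z) u ω
      rw [hu] at hmem
      simp only [Set.mem_setOf_eq] at hmem ⊢
      rw [hz] at h2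
      rw [← hmem, h2]
      ring
    · rw [hu]; exact hz

lemma reach {i : ℕ} {ω : Ω} {t : ℕ} (h : aN Z t ω = (i : ℝ) + 1) :
    ∃ u ≤ t, aN Z u ω = (i : ℝ) := by
  induction t with
  | zero =>
    exfalso
    have := aN_zero (Z := Z) ω
    rw [h] at this
    have : (0:ℝ) ≤ (i : ℝ) := Nat.cast_nonneg i
    linarith
  | succ t ih =>
    rcases h01 (t+1) ω with hz | hz
    · have ht : aN Z t ω = (i : ℝ) + 1 := by rw [aN_succ, hz] at h; linarith
      obtain ⟨u, hu, hu'⟩ := ih ht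
      exact ⟨u, by omega, hu'⟩
    · have ht : aN Z t ω = (i : ℝ) := by rw [aN_succ, hz] at h; linarith
      exact ⟨t, by omega, ht⟩

omit h01 in
lemma D_eq (i t k : ℕ) : aD Z i t k = aB Z i t ∩ aB Z (i + 1) (t + k + 1) := by
  ext ω
  constructor
  · rintro ⟨hB, hN, hZ⟩
    refine ⟨hB, ⟨?_, Or.inl hZ⟩⟩
    rw [aN_succ, hN, hZ]
    push_cast; ring
  · rintro ⟨hB, hN, hZ⟩
    have hZ1 : Z (t + k + 1) ω = 1 := by
      rcases hZ with hZ | hZ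
      · exact hZ
      · omega
    refine ⟨hB, ?_, hZ1⟩
    have := aN_succ (Z := Z) (t + k) ω
    rw [hN, hZ1] at this
    push_cast at this ⊢
    linarith

lemma aB_disj (i : ℕ) : Pairwise (Function.onFun Disjoint fun t => aB Z i t) := by
  intro t t' hne
  rw [Function.onFun, Set.disjoint_left]
  intro ω h1 h2
  exact hne ((B_T h01 h1).symm.trans (B_T h01 h2))

lemma aD_disj (i : ℕ) :
    Pairwise (Function.onFun Disjoint fun p : ℕ × ℕ => aD Z i p.1 p.2) := by
  intro p p' hne
  rw [Function.onFun, Set.disjoint_left]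
  intro ω h1 h2
  rw [D_eq, Set.mem_inter_iff] at h1 h2
  have e1 := (B_T h01 h1.1).symm.trans (B_T h01 h2.1)
  have e2 := (B_T h01 h1.2).symm.trans (B_T h01 h2.2)
  exact hne (Prod.ext e1 (by omega))

/-- The main event identity for waiting times. -/
lemma event_eq (i k : ℕ) :
    {ω | aT Z (i + 1) ω - aT Z i ω = k + 1} = ⋃ t, aD Z i t k := by
  ext ω
  simp only [Set.mem_setOf_eq, Set.mem_iUnion]
  constructor
  · intro h
    have hne : ∃ s, aN Z s ω = ((i + 1 : ℕ) : ℝ) := by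
      by_contra hc
      push_neg at hc
      have : {t | aN Z t ω = ((i + 1 : ℕ) : ℝ)} = ∅ := by
        ext s; simpa using hc s
      have : aT Z (i + 1) ω = 0 := by rw [aT, this, Nat.sInf_empty]
      omega
    obtain ⟨s, hs⟩ := hne
    have hs' : aN Z s ω = (i : ℝ) + 1 := by push_cast at hs ⊢; linarith
    obtain ⟨u, hu, hu'⟩ := reach h01 hs'
    have hB1 : ω ∈ aB Z (i + 1) (aT Z (i + 1) ω) := T_B h01 ⟨s, hs⟩
    have hB0 : ω ∈ aB Z i (aT Z i ω) := T_B h01 ⟨u, hu'⟩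
    have hle : aT Z i ω < aT Z (i + 1) ω := by omega
    refine ⟨aT Z i ω, ?_⟩
    rw [D_eq]
    refine ⟨hB0, ?_⟩
    have : aT Z i ω + k + 1 = aT Z (i + 1) ω := by omega
    rw [this]
    exact hB1
  · rintro ⟨t, hD⟩
    rw [D_eq] at hD
    have e1 := B_T h01 hD.1
    have e2 := B_T h01 hD.2
    omega

end basic

section meas
variable (ℱ : Filtration ℕ m0) (hZadapt : ∀ t, Measurable[ℱ t] (Z t))
include hZadapt

lemma measZ (t : ℕ) : Measurable (Z t) := (hZadapt t).mono (ℱ.le t) le_rfl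

lemma measN (t : ℕ) : Measurable[ℱ t] (aN Z t) := by
  unfold aN
  exact Finset.measurable_sum _ fun l hl =>
    (hZadapt l).mono (ℱ.mono (Finset.mem_Icc.mp hl).2) le_rfl

lemma measB (i t : ℕ) : MeasurableSet[ℱ t] (aB Z i t) := by
  cases t with
  | zero =>
    have h : aB Z i 0 = aN Z 0 ⁻¹' {(i : ℝ)} := by ext ω; simp [aB]
    rw [h]
    exact measN ℱ hZadapt 0 (measurableSet_singleton _)
  | succ t =>
    have h : aB Z i (t+1) = aN Z (t+1) ⁻¹' {(i : ℝ)} ∩ Z (t+1) ⁻¹' {(1:ℝ)} := by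
      ext ω; simp [aB]
    rw [h]
    exact (measN ℱ hZadapt (t+1) (measurableSet_singleton _)).inter
      (hZadapt (t+1) (measurableSet_singleton _))

lemma measB0 (i t : ℕ) : MeasurableSet (aB Z i t) := ℱ.le t _ (measB ℱ hZadapt i t)

lemma measC (i t k : ℕ) :
    MeasurableSet[ℱ (t + k)] (aB Z i t ∩ {ω | aN Z (t + k) ω = (i : ℝ)}) := by
  refine MeasurableSet.inter ?_ (measN ℱ hZadapt (t+k) (measurableSet_singleton _))
  exact (ℱ.mono (by omega : t ≤ t + k)) _ (measB ℱ hZadapt i t)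

lemma measD (i t k : ℕ) : MeasurableSet (aD Z i t k) := by
  have h : aD Z i t k = (aB Z i t ∩ {ω | aN Z (t+k) ω = (i:ℝ)}) ∩ Z (t+k+1) ⁻¹' {(1:ℝ)} := by
    ext ω
    simp only [aD, Set.mem_inter_iff, Set.mem_setOf_eq, Set.mem_preimage, Set.mem_singleton_iff]
    tauto
  rw [h]
  exact (ℱ.le (t+k) _ (measC ℱ hZadapt i t k)).inter
    ((measZ ℱ hZadapt (t+k+1)) (measurableSet_singleton _))

end meas

section core
variable (μ : Measure Ω) [IsProbabilityMeasure μ] (ℱ : Filtration ℕ m0) {q p K : ℝ}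
variable (h01 : ∀ t ω, Z t ω = 0 ∨ Z t ω = 1)
variable (hZadapt : ∀ t, Measurable[ℱ t] (Z t))
variable (hcond : ∀ t : ℕ, (μ[Z (t + 1) | ℱ t]) =ᵐ[μ] fun ω =>
      (q + K * ∑ i ∈ Finset.Icc 1 t, Z i ω) / (p + K * ∑ i ∈ Finset.Icc 1 t, Z i ω))
include h01 hZadapt hcond

lemma step_one (t c : ℕ) (A : Set Ω) (hA : MeasurableSet[ℱ t] A)
    (hAc : ∀ ω ∈ A, aN Z t ω = (c : ℝ)) :
    (μ (A ∩ {ω | Z (t + 1) ω = 1})).toReal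
      = (q + K * c) / (p + K * c) * (μ A).toReal := by
  have hmZ : Measurable (Z (t+1)) := measZ ℱ hZadapt (t+1)
  have hint : Integrable (Z (t+1)) μ := by
    refine Integrable.mono' (integrable_const (1:ℝ)) hmZ.aestronglyMeasurable
      (ae_of_all _ fun ω => ?_)
    rcases h01 (t+1) ω with h | h <;> simp [h]
  have hAm : MeasurableSet A := ℱ.le t _ hA
  have hS : MeasurableSet {ω | Z (t+1) ω = 1} := hmZ (measurableSet_singleton 1)
  have key1 : ∫ ω in A, Z (t+1) ω ∂μ = (μ (A ∩ {ω | Z (t+1) ω = 1})).toReal := by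
    have hrepr : Z (t+1) = Set.indicator {ω | Z (t+1) ω = 1} (fun _ => (1:ℝ)) := by
      funext ω
      by_cases hω : Z (t+1) ω = 1
      · rw [Set.indicator_of_mem (show ω ∈ {ω | Z (t+1) ω = 1} from hω)]; exact hω
      · rw [Set.indicator_of_notMem (show ω ∉ {ω | Z (t+1) ω = 1} from hω)]
        rcases h01 (t+1) ω with h | h
        · exact h
        · exact absurd h hω
    conv_lhs => rw [hrepr]
    rw [setIntegral_indicator hS, setIntegral_const, Measure.real_def, smul_eq_mul, mul_one]
  have key2 : ∫ ω in A, Z (t+1) ω ∂μ = (q + K * c) / (p + K * c) * (μ A).toReal := by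
    rw [← setIntegral_condExp (ℱ.le t) hint hA]
    calc ∫ ω in A, (μ[Z (t+1)|ℱ t]) ω ∂μ
        = ∫ ω in A, (q + K * aN Z t ω) / (p + K * aN Z t ω) ∂μ :=
          setIntegral_congr_ae hAm ((hcond t).mono fun ω h _ => h)
      _ = ∫ _ω in A, ((q + K * c) / (p + K * c) : ℝ) ∂μ :=
          setIntegral_congr_fun hAm (fun ω hω => by simp only [hAc ω hω])
      _ = (q + K * c) / (p + K * c) * (μ A).toReal := by
          rw [setIntegral_const, Measure.real_def, smul_eq_mul, mul_comm]
  rw [← key1, key2]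

lemma step_zero (t c : ℕ) (A : Set Ω) (hA : MeasurableSet[ℱ t] A)
    (hAc : ∀ ω ∈ A, aN Z t ω = (c : ℝ)) :
    (μ (A ∩ {ω | Z (t + 1) ω = 0})).toReal
      = (1 - (q + K * c) / (p + K * c)) * (μ A).toReal := by
  have hmZ : Measurable (Z (t+1)) := measZ ℱ hZadapt (t+1)
  have hAm : MeasurableSet A := ℱ.le t _ hA
  have hS0 : MeasurableSet {ω | Z (t+1) ω = 0} := hmZ (measurableSet_singleton 0)
  have hsplit : A = (A ∩ {ω | Z (t+1) ω = 1}) ∪ (A ∩ {ω | Z (t+1) ω = 0}) := by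
    ext ω
    constructor
    · intro h
      rcases h01 (t+1) ω with hz | hz
      · exact Or.inr ⟨h, hz⟩
      · exact Or.inl ⟨h, hz⟩
    · rintro (⟨h, _⟩ | ⟨h, _⟩) <;> exact h
  have hdisj : Disjoint (A ∩ {ω | Z (t+1) ω = 1}) (A ∩ {ω | Z (t+1) ω = 0}) := by
    rw [Set.disjoint_left]
    rintro ω ⟨_, h1⟩ ⟨_, h0⟩
    simp only [Set.mem_setOf_eq] at h1 h0
    rw [h0] at h1
    exact one_ne_zero h1.symm
  have hsum : (μ A).toReal
      = (μ (A ∩ {ω | Z (t+1) ω = 1})).toReal + (μ (A ∩ {ω | Z (t+1) ω = 0})).toReal := by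
    rw [← ENNReal.toReal_add (measure_ne_top _ _) (measure_ne_top _ _),
      ← measure_union hdisj (hAm.inter hS0), ← hsplit]
  have h1 := step_one μ ℱ h01 hZadapt hcond t c A hA hAc
  linarith

variable (hq : 0 < q) (hqp : q < p) (hK : 0 < K)
include hq hqp hK

omit hq hqp hK in
lemma run (i t : ℕ) : ∀ k : ℕ,
    (μ (aB Z i t ∩ {ω | aN Z (t + k) ω = (i : ℝ)})).toReal
      = (1 - (q + K * i) / (p + K * i)) ^ k * (μ (aB Z i t)).toReal := by
  intro k
  induction k with
  | zero =>
    have h : aB Z i t ∩ {ω | aN Z (t + 0) ω = (i : ℝ)} = aB Z i t := by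
      apply Set.inter_eq_self_of_subset_left
      intro ω hω
      simpa using hω.1
    rw [h, pow_zero, one_mul]
  | succ k ih =>
    have hCset : aB Z i t ∩ {ω | aN Z (t + (k + 1)) ω = (i : ℝ)}
        = (aB Z i t ∩ {ω | aN Z (t + k) ω = (i : ℝ)}) ∩ {ω | Z (t + k + 1) ω = 0} := by
      ext ω
      simp only [Set.mem_inter_iff, Set.mem_setOf_eq]
      constructor
      · rintro ⟨hB, hN⟩
        have h1 : aN Z t ω ≤ aN Z (t + k) ω := aN_mono h01 ω (by omega)
        have h2 := aN_succ (Z := Z) (t + k) ω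
        have h3 : aN Z (t + (k + 1)) ω = aN Z (t + k) ω + Z (t + k + 1) ω := by
          rw [show t + (k + 1) = (t + k) + 1 by omega] at hN ⊢
          exact h2
        have hBN : aN Z t ω = (i : ℝ) := hB.1
        rcases h01 (t + k + 1) ω with hz | hz
        · refine ⟨⟨hB, ?_⟩, hz⟩
          rw [h3, hz] at hN
          linarith
        · exfalso
          rw [h3, hz] at hN
          have h4 : aN Z (t + k) ω ≥ (i : ℝ) := by rw [← hBN]; exact h1
          linarith
      · rintro ⟨⟨hB, hN⟩, hz⟩
        refine ⟨hB, ?_⟩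
        rw [show t + (k + 1) = (t + k) + 1 by omega, aN_succ, hN, hz, add_zero]
    rw [hCset]
    rw [step_zero μ ℱ h01 hZadapt hcond (t + k) i _ (measC ℱ hZadapt i t k)
      (fun ω hω => hω.2), ih]
    ring

omit hq hqp hK in
omit hq hqp hK in
lemma measD_toReal (i t k : ℕ) :
    (μ (aD Z i t k)).toReal
      = (q + K * i) / (p + K * i) * (1 - (q + K * i) / (p + K * i)) ^ k
        * (μ (aB Z i t)).toReal := by
  have hDset : aD Z i t k
      = (aB Z i t ∩ {ω | aN Z (t + k) ω = (i : ℝ)}) ∩ {ω | Z (t + k + 1) ω = 1} := by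
    ext ω
    simp only [aD, Set.mem_inter_iff, Set.mem_setOf_eq]
    tauto
  rw [hDset, step_one μ ℱ h01 hZadapt hcond (t + k) i _ (measC ℱ hZadapt i t k)
    (fun ω hω => hω.2), run μ ℱ h01 hZadapt hcond i t k]
  ring

lemma muD (i t k : ℕ) :
    μ (aD Z i t k) = ENNReal.ofReal ((q + K * i) / (p + K * i)
        * (1 - (q + K * i) / (p + K * i)) ^ k) * μ (aB Z i t) := by
  have hr0 := r_pos hq hqp hK i
  have hr1 := r_lt_one hq hqp hK i
  have hnn : 0 ≤ (q + K * i) / (p + K * i) * (1 - (q + K * i) / (p + K * i)) ^ k := by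
    apply mul_nonneg hr0.le
    apply pow_nonneg
    linarith
  rw [← ENNReal.ofReal_toReal (measure_ne_top μ (aD Z i t k)),
    measD_toReal μ ℱ h01 hZadapt hcond i t k,
    ENNReal.ofReal_mul hnn, ENNReal.ofReal_toReal (measure_ne_top μ (aB Z i t))]

lemma total : ∀ i : ℕ, ∑' t, μ (aB Z i t) = 1 := by
  intro i
  induction i with
  | zero =>
    have h0 : aB Z 0 0 = Set.univ := by
      ext ω
      simp [aB, aN]
    have hs : ∀ t : ℕ, aB Z 0 (t + 1) = ∅ := by
      intro t
      ext ω
      simp only [aB, Set.mem_setOf_eq, Set.mem_empty_iff_false, iff_false, not_and]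
      intro hN
      rintro (hZ | hZ)
      · have hm : (0:ℝ) ≤ aN Z t ω := by
          have := aN_mono h01 ω (Nat.zero_le t)
          rwa [aN_zero] at this
        have h2 := aN_succ (Z := Z) t ω
        rw [hZ] at h2
        rw [Nat.cast_zero] at hN
        linarith
      · omega
    rw [tsum_eq_single 0 ?_]
    · rw [h0, measure_univ]
    · intro t ht
      obtain ⟨s, rfl⟩ := Nat.exists_eq_succ_of_ne_zero ht
      rw [hs, measure_empty]
  | succ i ih =>
    have hU : (⋃ s, aB Z (i + 1) s) = ⋃ pr : ℕ × ℕ, aD Z i pr.1 pr.2 := by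
      ext ω
      simp only [Set.mem_iUnion]
      constructor
      · rintro ⟨s, hB⟩
        have hN : aN Z s ω = ((i + 1 : ℕ) : ℝ) := hB.1
        have hs' : aN Z s ω = (i : ℝ) + 1 := by push_cast at hN ⊢; linarith
        obtain ⟨u, hu, hu'⟩ := reach h01 hs'
        have hTle : aT Z i ω ≤ u := Nat.sInf_le hu'
        have hB0 := T_B h01 ⟨u, hu'⟩
        have hne : aT Z i ω ≠ s := by
          intro he
          have h2 := hB0.1
          rw [he, hs'] at h2
          have : (0:ℝ) ≤ (i:ℝ) := Nat.cast_nonneg i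
          linarith
        have hlt : aT Z i ω < s := lt_of_le_of_ne (le_trans hTle hu) hne
        refine ⟨(aT Z i ω, s - aT Z i ω - 1), ?_⟩
        rw [D_eq]
        refine ⟨hB0, ?_⟩
        have e : aT Z i ω + (s - aT Z i ω - 1) + 1 = s := by omega
        rw [e]
        exact hB
      · rintro ⟨⟨t, k⟩, hD⟩
        rw [D_eq] at hD
        exact ⟨t + k + 1, hD.2⟩
    have hL := measure_iUnion (μ := μ) (aB_disj h01 (i + 1)) (measB0 ℱ hZadapt (i + 1))
    have hR := measure_iUnion (μ := μ) (aD_disj h01 i) (fun pr => measD ℱ hZadapt i pr.1 pr.2)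
    have hinner : ∀ t : ℕ, ∑' k, μ (aD Z i t k) = μ (aB Z i t) := by
      intro t
      have hr0 := r_pos hq hqp hK i
      have hr1 := r_lt_one hq hqp hK i
      calc ∑' k, μ (aD Z i t k)
          = ∑' k, ENNReal.ofReal ((q + K * i) / (p + K * i)
              * (1 - (q + K * i) / (p + K * i)) ^ k) * μ (aB Z i t) := by
            exact tsum_congr fun k => muD μ ℱ h01 hZadapt hcond hq hqp hK i t k
        _ = (∑' k, ENNReal.ofReal ((q + K * i) / (p + K * i)
              * (1 - (q + K * i) / (p + K * i)) ^ k)) * μ (aB Z i t) :=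
            ENNReal.tsum_mul_right
        _ = μ (aB Z i t) := by
            rw [← ENNReal.ofReal_tsum_of_nonneg]
            · rw [tsum_mul_left, tsum_geometric_of_lt_one (by linarith) (by linarith)]
              rw [show (1 - (1 - (q + K * i) / (p + K * i))) = (q + K * i) / (p + K * i) by ring]
              rw [mul_inv_cancel₀ (ne_of_gt hr0), ENNReal.ofReal_one, one_mul]
            · intro k
              apply mul_nonneg hr0.le
              apply pow_nonneg
              linarith
            · exact (summable_geometric_of_lt_one (by linarith) (by linarith)).mul_left _
    rw [← hL, hU, hR, ENNReal.tsum_prod']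
    calc ∑' t, ∑' k, μ (aD Z i t k) = ∑' t, μ (aB Z i t) := tsum_congr hinner
      _ = 1 := ih

lemma waiting (i k : ℕ) :
    μ {ω | aT Z (i + 1) ω - aT Z i ω = k + 1}
      = ENNReal.ofReal ((q + K * i) / (p + K * i)
          * (1 - (q + K * i) / (p + K * i)) ^ k) := by
  have hdisjt : Pairwise (Function.onFun Disjoint fun t => aD Z i t k) := by
    intro t t' hne
    exact aD_disj h01 i (show ((t, k) : ℕ × ℕ) ≠ (t', k) from
      fun h => hne (congrArg Prod.fst h))
  rw [event_eq h01, measure_iUnion (μ := μ) hdisjt (fun t => measD ℱ hZadapt i t k)]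
  calc ∑' t, μ (aD Z i t k)
      = ∑' t, ENNReal.ofReal ((q + K * i) / (p + K * i)
          * (1 - (q + K * i) / (p + K * i)) ^ k) * μ (aB Z i t) :=
        tsum_congr fun t => muD μ ℱ h01 hZadapt hcond hq hqp hK i t k
    _ = ENNReal.ofReal ((q + K * i) / (p + K * i)
          * (1 - (q + K * i) / (p + K * i)) ^ k) * ∑' t, μ (aB Z i t) :=
        ENNReal.tsum_mul_left
    _ = _ := by rw [total μ ℱ h01 hZadapt hcond hq hqp hK, mul_one]

end core

section measT
variable (ℱ : Filtration ℕ m0)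
variable (h01 : ∀ t ω, Z t ω = 0 ∨ Z t ω = 1)
variable (hZadapt : ∀ t, Measurable[ℱ t] (Z t))
include h01 hZadapt

lemma T_succ_eq_B (i n : ℕ) : {ω | aT Z i ω = n + 1} = aB Z i (n + 1) := by
  ext ω
  simp only [Set.mem_setOf_eq]
  constructor
  · intro h
    have hne : ∃ s, aN Z s ω = (i : ℝ) := by
      by_contra hc
      push_neg at hc
      have hemp : {t | aN Z t ω = (i : ℝ)} = ∅ := by ext s; simpa using hc s
      have h0 : aT Z i ω = 0 := by rw [aT, hemp, Nat.sInf_empty]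
      omega
    have := T_B h01 hne
    rwa [h] at this
  · intro h
    exact B_T h01 h

lemma measT (i : ℕ) : Measurable (aT Z i) := by
  apply measurable_to_countable'
  intro n
  have hp : aT Z i ⁻¹' {n} = {ω | aT Z i ω = n} := rfl
  cases n with
  | zero =>
    have h : {ω | aT Z i ω = 0} = (⋃ s, aB Z i (s + 1))ᶜ := by
      ext ω
      simp only [Set.mem_setOf_eq, Set.mem_compl_iff, Set.mem_iUnion, not_exists]
      constructor
      · intro h s hs
        have := B_T h01 hs
        omega
      · intro h
        by_contra hne
        obtain ⟨n, hn⟩ := Nat.exists_eq_succ_of_ne_zero hne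
        have : ω ∈ aB Z i (n + 1) := by
          rw [← T_succ_eq_B ℱ h01 hZadapt i n]
          exact hn
        exact h n this
    rw [hp, h]
    exact (MeasurableSet.iUnion fun s => measB0 ℱ hZadapt i (s + 1)).compl
  | succ n =>
    rw [hp, T_succ_eq_B ℱ h01 hZadapt i n]
    exact measB0 ℱ hZadapt i (n + 1)

end measT

lemma nat_lintegral (μ : Measure Ω) (g : Ω → ℕ) (hg : Measurable g) :
    ∫⁻ ω, (g ω : ℝ≥0∞) ∂μ = ∑' n : ℕ, (n : ℝ≥0∞) * μ {ω | g ω = n} := by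
  have hrepr : ∀ ω, (g ω : ℝ≥0∞)
      = ∑' n : ℕ, ({ω' | g ω' = n}).indicator (fun _ => (n : ℝ≥0∞)) ω := by
    intro ω
    rw [tsum_eq_single (g ω)]
    · rw [Set.indicator_of_mem (show ω ∈ {ω' | g ω' = g ω} from rfl)]
    · intro n hn
      rw [Set.indicator_of_notMem (show ω ∉ {ω' | g ω' = n} from fun h => hn h.symm)]
  calc ∫⁻ ω, (g ω : ℝ≥0∞) ∂μ
      = ∫⁻ ω, ∑' n : ℕ, ({ω' | g ω' = n}).indicator (fun _ => (n : ℝ≥0∞)) ω ∂μ :=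
        lintegral_congr hrepr
    _ = ∑' n : ℕ, ∫⁻ ω, ({ω' | g ω' = n}).indicator (fun _ => (n : ℝ≥0∞)) ω ∂μ :=
        lintegral_tsum fun n =>
          (Measurable.indicator measurable_const (hg (measurableSet_singleton n))).aemeasurable
    _ = ∑' n : ℕ, (n : ℝ≥0∞) * μ {ω | g ω = n} :=
        tsum_congr fun n => lintegral_indicator_const (hg (measurableSet_singleton n)) _

section expect
variable (μ : Measure Ω) [IsProbabilityMeasure μ] (ℱ : Filtration ℕ m0) {q p K : ℝ}
variable (h01 : ∀ t ω, Z t ω = 0 ∨ Z t ω = 1)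
variable (hZadapt : ∀ t, Measurable[ℱ t] (Z t))
variable (hcond : ∀ t : ℕ, (μ[Z (t + 1) | ℱ t]) =ᵐ[μ] fun ω =>
      (q + K * ∑ i ∈ Finset.Icc 1 t, Z i ω) / (p + K * ∑ i ∈ Finset.Icc 1 t, Z i ω))
variable (hq : 0 < q) (hqp : q < p) (hK : 0 < K)
include h01 hZadapt hcond hq hqp hK

lemma geom_sum_val (i : ℕ) :
    ∑' n : ℕ, (((n + 1 : ℕ) : ℝ) * ((q + K * i) / (p + K * i)
      * (1 - (q + K * i) / (p + K * i)) ^ n)) = (p + K * i) / (q + K * i) := by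
  obtain ⟨ha, hb⟩ := denom_pos hq hqp hK i
  set r : ℝ := (q + K * i) / (p + K * i) with hrdef
  have hr0 : 0 < r := r_pos hq hqp hK i
  have hr1 : r < 1 := r_lt_one hq hqp hK i
  set x : ℝ := 1 - r with hxdef
  have hx0 : 0 ≤ x := by simp only [hxdef]; linarith
  have hx1 : x < 1 := by simp only [hxdef]; linarith
  have hxn : ‖x‖ < 1 := by rw [Real.norm_eq_abs, abs_of_nonneg hx0]; exact hx1
  have hs1 : Summable (fun n : ℕ => (n : ℝ) * x ^ n) := by
    have := summable_pow_mul_geometric_of_norm_lt_one 1 hxn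
    simpa using this
  have hs2 : Summable (fun n : ℕ => x ^ n) := summable_geometric_of_lt_one hx0 hx1
  have hcongr : (fun n : ℕ => ((n + 1 : ℕ) : ℝ) * (r * x ^ n))
      = fun n : ℕ => r * ((n : ℝ) * x ^ n + x ^ n) := by
    funext n
    push_cast
    ring
  calc ∑' n : ℕ, (((n + 1 : ℕ) : ℝ) * (r * x ^ n))
      = ∑' n : ℕ, r * ((n : ℝ) * x ^ n + x ^ n) := by rw [hcongr]
    _ = r * ∑' n : ℕ, ((n : ℝ) * x ^ n + x ^ n) := tsum_mul_left
    _ = r * (∑' n : ℕ, (n : ℝ) * x ^ n + ∑' n : ℕ, x ^ n) := by rw [Summable.tsum_add hs1 hs2]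
    _ = r * (x / (1 - x) ^ 2 + (1 - x)⁻¹) := by
        rw [tsum_coe_mul_geometric_of_norm_lt_one hxn, tsum_geometric_of_lt_one hx0 hx1]
    _ = (p + K * i) / (q + K * i) := by
        have h1x : 1 - x = r := by simp only [hxdef]; ring
        have key : ∀ a b : ℝ, a ≠ 0 → b ≠ 0 →
            (a / b) * ((1 - a / b) / (a / b) ^ 2 + (a / b)⁻¹) = b / a := by
          intro a b ha0 hb0
          field_simp
          ring
        rw [h1x, hxdef, hrdef]
        exact key _ _ (ne_of_gt ha) (ne_of_gt hb)

lemma wait_lint (i : ℕ) :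
    ∫⁻ ω, ((aT Z (i + 1) ω - aT Z i ω : ℕ) : ℝ≥0∞) ∂μ
      = ENNReal.ofReal ((p + K * i) / (q + K * i)) := by
  obtain ⟨ha, hb⟩ := denom_pos hq hqp hK i
  have hr0 := r_pos hq hqp hK i
  have hr1 := r_lt_one hq hqp hK i
  have hg : Measurable fun ω => aT Z (i + 1) ω - aT Z i ω :=
    (measT ℱ h01 hZadapt (i + 1)).sub (measT ℱ h01 hZadapt i)
  rw [nat_lintegral μ _ hg, tsum_eq_zero_add' ENNReal.summable]
  simp only [Nat.cast_zero, zero_mul, zero_add]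
  have hterm : ∀ n : ℕ, ((n + 1 : ℕ) : ℝ≥0∞) * μ {ω | aT Z (i + 1) ω - aT Z i ω = n + 1}
      = ENNReal.ofReal (((n + 1 : ℕ) : ℝ) * ((q + K * i) / (p + K * i)
          * (1 - (q + K * i) / (p + K * i)) ^ n)) := by
    intro n
    rw [waiting μ ℱ h01 hZadapt hcond hq hqp hK i n,
      ENNReal.ofReal_mul (Nat.cast_nonneg _), ENNReal.ofReal_natCast]
  calc ∑' n : ℕ, ((n + 1 : ℕ) : ℝ≥0∞) * μ {ω | aT Z (i + 1) ω - aT Z i ω = n + 1}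
      = ∑' n : ℕ, ENNReal.ofReal (((n + 1 : ℕ) : ℝ) * ((q + K * i) / (p + K * i)
          * (1 - (q + K * i) / (p + K * i)) ^ n)) := tsum_congr hterm
    _ = ENNReal.ofReal (∑' n : ℕ, (((n + 1 : ℕ) : ℝ) * ((q + K * i) / (p + K * i)
          * (1 - (q + K * i) / (p + K * i)) ^ n))) := by
        rw [← ENNReal.ofReal_tsum_of_nonneg]
        · intro n
          apply mul_nonneg (Nat.cast_nonneg _)
          apply mul_nonneg hr0.le
          apply pow_nonneg
          linarith
        · have hxn : ‖1 - (q + K * i) / (p + K * i)‖ < 1 := by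
            rw [Real.norm_eq_abs, abs_of_nonneg (by linarith)]
            linarith
          have hs1 : Summable (fun n : ℕ => (n : ℝ) * (1 - (q + K * i) / (p + K * i)) ^ n) := by
            have := summable_pow_mul_geometric_of_norm_lt_one 1 hxn
            simpa using this
          have hs2 : Summable (fun n : ℕ => (1 - (q + K * i) / (p + K * i)) ^ n) :=
            summable_geometric_of_lt_one (by linarith) (by linarith)
          apply Summable.congr (((hs1.add hs2).mul_left ((q + K * i) / (p + K * i))))
          intro n
          push_cast
          ring
    _ = ENNReal.ofReal ((p + K * i) / (q + K * i)) := by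
        rw [geom_sum_val μ ℱ h01 hZadapt hcond hq hqp hK i]

lemma ae_split (i : ℕ) :
    ∀ᵐ ω ∂μ, aT Z (i + 1) ω = aT Z i ω + (aT Z (i + 1) ω - aT Z i ω) := by
  have h1 : μ (⋃ s, aB Z (i + 1) s) = 1 := by
    rw [measure_iUnion (aB_disj h01 (i + 1)) (measB0 ℱ hZadapt (i + 1))]
    exact total μ ℱ h01 hZadapt hcond hq hqp hK (i + 1)
  have h2 : μ ((⋃ s, aB Z (i + 1) s)ᶜ) = 0 := by
    rw [measure_compl (MeasurableSet.iUnion (measB0 ℱ hZadapt (i + 1))) (measure_ne_top _ _), h1,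
      measure_univ, tsub_self]
  rw [ae_iff]
  refine measure_mono_null ?_ h2
  intro ω hω
  simp only [Set.mem_setOf_eq] at hω
  simp only [Set.mem_compl_iff, Set.mem_iUnion, not_exists]
  intro s hs
  apply hω
  have hN : aN Z s ω = (i : ℝ) + 1 := by
    have := hs.1
    push_cast at this ⊢
    linarith
  obtain ⟨u, hu, hu'⟩ := reach h01 hN
  have hTu : aT Z i ω ≤ u := Nat.sInf_le hu'
  have hT1 := B_T h01 hs
  omega

lemma T_lint : ∀ m : ℕ, ∫⁻ ω, ((aT Z m ω : ℕ) : ℝ≥0∞) ∂μ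
    = ∑ i ∈ Finset.range m, ENNReal.ofReal ((p + K * i) / (q + K * i)) := by
  intro m
  induction m with
  | zero =>
    simp [T_zero]
  | succ m ih =>
    have hae : (fun ω => ((aT Z (m + 1) ω : ℕ) : ℝ≥0∞))
        =ᵐ[μ] fun ω => ((aT Z m ω : ℕ) : ℝ≥0∞)
          + ((aT Z (m + 1) ω - aT Z m ω : ℕ) : ℝ≥0∞) := by
      refine (ae_split μ ℱ h01 hZadapt hcond hq hqp hK m).mono fun ω h => ?_
      dsimp only
      conv_lhs => rw [h]
      rw [Nat.cast_add]
    have hmeasf : Measurable fun ω => ((aT Z m ω : ℕ) : ℝ≥0∞) :=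
      measurable_from_nat.comp (measT ℱ h01 hZadapt m)
    rw [lintegral_congr_ae hae, lintegral_add_left hmeasf, ih,
      wait_lint μ ℱ h01 hZadapt hcond hq hqp hK m, Finset.sum_range_succ]

lemma expT (m : ℕ) : ∫ ω, ((aT Z m ω : ℕ) : ℝ) ∂μ
    = ∑ i ∈ Finset.range m, (p + K * i) / (q + K * i) := by
  have hmeas : Measurable fun ω => ((aT Z m ω : ℕ) : ℝ) :=
    measurable_from_nat.comp (measT ℱ h01 hZadapt m)
  rw [integral_eq_lintegral_of_nonneg_ae (ae_of_all _ fun ω => Nat.cast_nonneg _)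
    hmeas.aestronglyMeasurable]
  have hcast : (fun ω => ENNReal.ofReal ((aT Z m ω : ℕ) : ℝ))
      = fun ω => ((aT Z m ω : ℕ) : ℝ≥0∞) := by
    funext ω
    exact ENNReal.ofReal_natCast _
  rw [hcast, T_lint μ ℱ h01 hZadapt hcond hq hqp hK m,
    ENNReal.toReal_sum (fun i _ => ENNReal.ofReal_ne_top)]
  refine Finset.sum_congr rfl fun i _ => ?_
  obtain ⟨ha, hb⟩ := denom_pos hq hqp hK i
  exact ENNReal.toReal_ofReal (le_of_lt (div_pos hb ha))

end expect

end AdaSubPF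

/-- Let `j` satisfy the finite-sample PF property, so that every
consideration of `j` results in selection and the inclusion indicators `Z^{(t)}` of `j`
satisfy `P(Z^{(t+1)} = 1 | ℱ_t) = (q + K i)/(p + K i)` after `i` considerations. Then the
waiting times between successive considerations satisfy
`T_j^{(i+1)} − T_j^{(i)} ~ Geometric((q + Ki)/(p + Ki))` and consequently
`E[T_j^{(m)}] = ∑_{i=0}^{m-1} (p + Ki)/(q + Ki)`, where
`T_j^{(m)} = min{t : ∑_{l ≤ t} Z^{(l)} = m}`. -/
theorem adaSub_waiting_times_PF {Ω : Type*} {m0 : MeasurableSpace Ω}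
    (μ : Measure Ω) [IsProbabilityMeasure μ] (ℱ : Filtration ℕ m0)
    (q p K : ℝ) (hq : 0 < q) (hqp : q < p) (hK : 0 < K)
    (Z : ℕ → Ω → ℝ)
    (hZ01 : ∀ t ω, Z t ω = 0 ∨ Z t ω = 1)
    (hZadapt : ∀ t, Measurable[ℱ t] (Z t))
    (hcond : ∀ t : ℕ, (μ[Z (t + 1) | ℱ t]) =ᵐ[μ] fun ω =>
      (q + K * ∑ i ∈ Finset.Icc 1 t, Z i ω) / (p + K * ∑ i ∈ Finset.Icc 1 t, Z i ω)) :
    (∀ i : ℕ, ∀ k : ℕ, 1 ≤ k →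
      μ {ω | sInf {t : ℕ | ∑ l ∈ Finset.Icc 1 t, Z l ω = ((i : ℝ) + 1)} -
             sInf {t : ℕ | ∑ l ∈ Finset.Icc 1 t, Z l ω = (i : ℝ)} = k}
        = ENNReal.ofReal ((q + K * i) / (p + K * i) *
            (1 - (q + K * i) / (p + K * i)) ^ (k - 1))) ∧
    (∀ m : ℕ,
      ∫ ω, ((sInf {t : ℕ | ∑ l ∈ Finset.Icc 1 t, Z l ω = (m : ℝ)} : ℕ) : ℝ) ∂μ
        = ∑ i ∈ Finset.range m, (p + K * i) / (q + K * i)) := by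
  constructor
  · intro i k hk
    obtain ⟨k', rfl⟩ := Nat.exists_eq_succ_of_ne_zero (by omega : k ≠ 0)
    have h := AdaSubPF.waiting μ ℱ hZ01 hZadapt hcond hq hqp hK i k'
    have hset : {ω | sInf {t : ℕ | ∑ l ∈ Finset.Icc 1 t, Z l ω = ((i : ℝ) + 1)} -
             sInf {t : ℕ | ∑ l ∈ Finset.Icc 1 t, Z l ω = (i : ℝ)} = k' + 1}
        = {ω | AdaSubPF.aT Z (i + 1) ω - AdaSubPF.aT Z i ω = k' + 1} := by
      simp only [show ((i : ℝ) + 1) = ((i + 1 : ℕ) : ℝ) by push_cast; ring]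
      rfl
    rw [hset, Nat.succ_sub_one]
    exact h
  · intro m
    exact AdaSubPF.expT μ ℱ hZ01 hZadapt hcond hq hqp hK m
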